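/- arXiv:1906.05618 — 3 statements merged into one kernel-verified Lean document; each statement's English description precedes it below -/
import Mathlib

section
/- For any real x not in ℤ, the limit as r → ∞ of the symmetric sum ∑_{k=-r}^{r} 1/(x+k) exists and equals π·cot(πx). -/
open Filter Real

lemma summable_g (x : ℝ) (h : ∀ n : ℤ, x - n ≠ 0 ∧ x + n ≠ 0) :
    Summable (fun n : ℤ => (1 / (x - n) + 1 / (x + n)) / 2) := by
  have hval : ∀ n : ℤ, (1 / (x - n) + 1 / (x + n)) / 2 = x / (x ^ 2 - (n : ℝ) ^ 2) := by
    intro n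
    have h1 := (h n).1
    have h2 := (h n).2
    have hne : x ^ 2 - (n : ℝ) ^ 2 ≠ 0 := by
      have := mul_ne_zero h1 h2
      rwa [show (x - (n:ℝ)) * (x + n) = x ^ 2 - (n:ℝ) ^ 2 by ring] at this
    field_simp
    ring
  simp_rw [hval]
  have hnat : Summable (fun n : ℕ => x / (x ^ 2 - (n : ℝ) ^ 2)) := by
    have hsum : Summable (fun n : ℕ => (2 * |x| + 1) * (1 / (n : ℝ) ^ 2)) :=
      (Real.summable_one_div_nat_pow.mpr one_lt_two).mul_left _
    apply Summable.of_norm_bounded_eventually hsum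
    rw [Nat.cofinite_eq_atTop]
    filter_upwards [eventually_ge_atTop ⌈2 * |x| + 2⌉₊] with n hn
    have hn' : 2 * |x| + 2 ≤ (n : ℝ) := le_trans (Nat.le_ceil _) (by exact_mod_cast hn)
    have ha : (0:ℝ) ≤ |x| := abs_nonneg x
    have hxn : x ^ 2 ≤ |x| ^ 2 := by rw [sq_abs]
    have hden : (0:ℝ) < (n : ℝ) ^ 2 - x ^ 2 := by nlinarith
    have hnpos : (0:ℝ) < (n : ℝ) ^ 2 := by nlinarith
    have habs : ‖x / (x ^ 2 - (n : ℝ) ^ 2)‖ = |x| / ((n : ℝ) ^ 2 - x ^ 2) := by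
      rw [Real.norm_eq_abs, abs_div, abs_sub_comm, abs_of_pos hden]
    rw [habs, mul_one_div, div_le_div_iff₀ hden hnpos]
    have hnn : (2 * |x| + 2) ^ 2 ≤ (n : ℝ) ^ 2 := by nlinarith
    nlinarith [mul_nonneg ha ha, mul_nonneg (mul_nonneg ha ha) ha]
  apply Summable.of_nat_of_neg
  · exact hnat
  · apply hnat.congr
    intro n
    push_cast
    ring_nf

section aux
open Complex intervalIntegral


lemma integral_exp_aux (a : ℝ) (ha : a ≠ 0) :
    (∫ t : ℝ in (-π)..π, Complex.exp ((a : ℂ) * Complex.I * t)) =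
      2 * Real.sin (a * π) / a := by
  have hc : (a : ℂ) * Complex.I ≠ 0 := by
    simp [ha, Complex.I_ne_zero]
  have := integral_exp_mul_complex (a := (-π : ℝ)) (b := (π : ℝ)) hc
  rw [this]
  have h1 : (a : ℂ) * Complex.I * (π : ℝ) = ((a * π : ℝ) : ℂ) * Complex.I := by
    push_cast; ring
  have h2 : (a : ℂ) * Complex.I * ((-π : ℝ) : ℂ) = (-((a * π : ℝ) : ℂ)) * Complex.I := by
    push_cast; ring
  rw [h1, h2, Complex.exp_mul_I, Complex.exp_mul_I, Complex.cos_neg, Complex.sin_neg,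
    ← Complex.ofReal_cos, ← Complex.ofReal_sin]
  have ha' : (a : ℂ) ≠ 0 := by exact_mod_cast ha
  rw [div_eq_div_iff hc ha']
  ring

lemma integral_cos_aux (x : ℝ) (n : ℤ) (hsub : x - n ≠ 0) (hadd : x + n ≠ 0) :
    (∫ t : ℝ in (-π)..π, Complex.exp (-(n : ℂ) * Complex.I * t) * (Real.cos (x * t) : ℂ)) =
      (((-1 : ℝ) ^ n * Real.sin (x * π) * (1 / (x - n) + 1 / (x + n)) : ℝ) : ℂ) := by
  have hpt : ∀ t : ℝ, Complex.exp (-(n : ℂ) * Complex.I * t) * (Real.cos (x * t) : ℂ) =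
      (Complex.exp (((x - n : ℝ) : ℂ) * Complex.I * t)
        + Complex.exp (((-(x + n) : ℝ) : ℂ) * Complex.I * t)) / 2 := by
    intro t
    rw [Complex.ofReal_cos, Complex.ofReal_mul, Complex.cos]
    rw [mul_div_assoc', mul_add, ← Complex.exp_add, ← Complex.exp_add]
    push_cast
    ring_nf
  rw [intervalIntegral.integral_congr (fun t _ => hpt t)]
  have hi1 : IntervalIntegrable (fun t : ℝ => Complex.exp (((x - n : ℝ) : ℂ) * Complex.I * t))
      MeasureTheory.volume (-π) π := by
    apply Continuous.intervalIntegrable; continuity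
  have hi2 : IntervalIntegrable (fun t : ℝ => Complex.exp (((-(x + n) : ℝ) : ℂ) * Complex.I * t))
      MeasureTheory.volume (-π) π := by
    apply Continuous.intervalIntegrable; continuity
  rw [intervalIntegral.integral_div, intervalIntegral.integral_add hi1 hi2,
    integral_exp_aux _ hsub, integral_exp_aux _ (neg_ne_zero.mpr hadd)]
  have h1 : Real.sin ((x - n) * π) = (-1 : ℝ) ^ n * Real.sin (x * π) := by
    rw [sub_mul, Real.sin_sub, Real.sin_int_mul_pi, mul_zero, sub_zero]
    have : Real.cos ((n : ℝ) * π) = (-1 : ℝ) ^ n := by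
      have := Real.cos_int_mul_pi_sub 0 n
      simpa using this
    rw [this]; ring
  have h2 : Real.sin (-(x + n) * π) = -((-1 : ℝ) ^ n * Real.sin (x * π)) := by
    rw [neg_mul, Real.sin_neg, add_mul, Real.sin_add, Real.sin_int_mul_pi, mul_zero, add_zero]
    have : Real.cos ((n : ℝ) * π) = (-1 : ℝ) ^ n := by
      have := Real.cos_int_mul_pi_sub 0 n
      simpa using this
    rw [this]; ring
  rw [h1, h2]
  have hsub' : ((x - n : ℝ) : ℂ) ≠ 0 := by exact_mod_cast hsub
  have hadd' : ((x + n : ℝ) : ℂ) ≠ 0 := by exact_mod_cast hadd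
  push_cast
  rw [mul_neg, neg_div_neg_eq]
  field_simp

lemma hasSum_main (x : ℝ) (hx : ∀ n : ℤ, x ≠ (n : ℝ)) :
    HasSum (fun n : ℤ => (1 / (x - n) + 1 / (x + n)) / 2) (π * Real.cot (π * x)) := by
  have hne : ∀ n : ℤ, x - n ≠ 0 ∧ x + n ≠ 0 := by
    intro n
    constructor
    · exact sub_ne_zero.mpr (hx n)
    · intro h
      exact hx (-n) (by push_cast; linarith)
  have hsin : Real.sin (x * π) ≠ 0 := by
    intro h
    rw [Real.sin_eq_zero_iff] at h
    obtain ⟨n, hn⟩ := h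
    exact hx n (mul_right_cancel₀ Real.pi_ne_zero hn.symm)
  haveI : Fact (0 < 2 * π) := ⟨by positivity⟩
  set g : ℤ → ℝ := fun n => (1 / (x - n) + 1 / (x + n)) / 2 with hg_def
  set f : ℝ → ℂ := fun t => ((Real.cos (x * t) : ℝ) : ℂ) with hf_def
  have hF_cont : Continuous (AddCircle.liftIco (2 * π) (-π) f) := by
    apply AddCircle.liftIco_continuous
    · show f (-π) = f (-π + 2 * π)
      rw [show -π + 2 * π = π by ring]
      simp [hf_def, mul_neg, Real.cos_neg]
    · exact (Complex.continuous_ofReal.comp (Real.continuous_cos.comp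
        (continuous_const.mul continuous_id))).continuousOn
  set F : C(AddCircle (2 * π), ℂ) := ⟨AddCircle.liftIco (2 * π) (-π) f, hF_cont⟩ with hF_def
  have hπC : (π : ℂ) ≠ 0 := by exact_mod_cast Real.pi_ne_zero
  have hFval : ∀ t : ℝ, t ∈ Set.Ico (-π) (-π + 2 * π) → F ((t : ℝ) : AddCircle (2 * π)) = f t := by
    intro t ht
    show AddCircle.liftIco (2 * π) (-π) f ↑t = f t
    exact AddCircle.liftIco_coe_apply ht
  have hFcoeff : ∀ n : ℤ, fourierCoeff (F : AddCircle (2 * π) → ℂ) n =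
      (((-1 : ℝ) ^ n * Real.sin (x * π) * g n / π : ℝ) : ℂ) := by
    intro n
    rw [fourierCoeff_eq_intervalIntegral _ n (-π)]
    have hint : (∫ t : ℝ in (-π)..(-π + 2 * π),
          fourier (-n) ((t : ℝ) : AddCircle (2 * π)) • (F : AddCircle (2 * π) → ℂ) t) =
        ∫ t : ℝ in (-π)..π, Complex.exp (-(n : ℂ) * Complex.I * t) * (Real.cos (x * t) : ℂ) := by
      rw [show -π + 2 * π = π by ring]
      apply intervalIntegral.integral_congr_ae
      have hae : ∀ᵐ t : ℝ, t ≠ π := by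
        rw [MeasureTheory.ae_iff]
        simpa using MeasureTheory.measure_singleton (π : ℝ)
      filter_upwards [hae] with t htne ht
      rw [Set.uIoc_of_le (by linarith [Real.pi_pos] : -π ≤ π)] at ht
      have htIco : t ∈ Set.Ico (-π) (-π + 2 * π) := by
        constructor
        · linarith [ht.1]
        · rw [show -π + 2 * π = π by ring]
          exact lt_of_le_of_ne ht.2 htne
      rw [hFval t htIco, fourier_coe_apply]
      have hexp : (2 * (π : ℂ) * Complex.I * ((-n : ℤ) : ℂ) * (t : ℂ) / ((2 * π : ℝ) : ℂ))
          = -(n : ℂ) * Complex.I * t := by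
        push_cast
        field_simp
      rw [hexp, smul_eq_mul]
    rw [hint, integral_cos_aux x n (hne n).1 (hne n).2, Complex.real_smul,
      ← Complex.ofReal_mul]
    norm_cast
    simp only [hg_def]
    field_simp
  have hsummable : Summable (fourierCoeff (F : AddCircle (2 * π) → ℂ)) := by
    rw [show fourierCoeff (F : AddCircle (2 * π) → ℂ) =
        fun n => (((-1 : ℝ) ^ n * Real.sin (x * π) * g n / π : ℝ) : ℂ) from funext hFcoeff]
    rw [Complex.summable_ofReal]
    apply Summable.of_norm_bounded (((summable_g x hne).norm).mul_left
      |Real.sin (x * π) / π|)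
    intro n
    have h1 : ((-1 : ℝ) ^ n * Real.sin (x * π) * g n / π)
        = (-1 : ℝ) ^ n * (Real.sin (x * π) / π * g n) := by ring
    rw [h1, Real.norm_eq_abs, abs_mul]
    have h2 : |(-1 : ℝ) ^ n| = 1 := by
      rcases Int.even_or_odd n with he | ho
      · rw [he.neg_one_zpow]; norm_num
      · rw [ho.neg_one_zpow]; norm_num
    rw [h2, one_mul, abs_mul, Real.norm_eq_abs]
  have hps := has_pointwise_sum_fourier_series_of_summable hsummable
    (((-π : ℝ) : AddCircle (2 * π)))
  have hmem : (-π : ℝ) ∈ Set.Ico (-π) (-π + 2 * π) := by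
    constructor
    · exact le_refl _
    · linarith [Real.pi_pos]
  have hfour : ∀ n : ℤ, fourier n (((-π : ℝ) : ℝ) : AddCircle (2 * π)) = (-1 : ℂ) ^ (-n) := by
    intro n
    rw [fourier_coe_apply]
    have h1 : (2 * (π : ℂ) * Complex.I * (n : ℂ) * ((-π : ℝ) : ℂ) / ((2 * π : ℝ) : ℂ))
        = ((-n : ℤ) : ℂ) * ((π : ℂ) * Complex.I) := by
      push_cast
      field_simp
    rw [h1, Complex.exp_int_mul, Complex.exp_pi_mul_I]
  have hz : ∀ n : ℤ, ((-1 : ℂ)) ^ n * ((-1 : ℂ)) ^ (-n) = 1 := by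
    intro n
    rw [← zpow_add₀ (by norm_num : (-1 : ℂ) ≠ 0)]
    simp
  have hterm : ∀ n : ℤ, fourierCoeff (⇑F) n • fourier n (((-π : ℝ)) : AddCircle (2 * π)) =
      ((Real.sin (x * π) / π : ℝ) : ℂ) * ((g n : ℝ) : ℂ) := by
    intro n
    rw [hFcoeff n, hfour n, smul_eq_mul]
    have h2 : ((-1 : ℝ) ^ n * Real.sin (x * π) * g n / π : ℝ)
        = ((-1 : ℝ) ^ n) * (Real.sin (x * π) / π * g n) := by ring
    rw [h2, Complex.ofReal_mul, Complex.ofReal_mul]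
    push_cast
    rw [mul_comm (((-1 : ℂ)) ^ n) _, mul_assoc, hz n, mul_one]
  have hFpt : F (((-π : ℝ)) : AddCircle (2 * π)) = ((Real.cos (x * π) : ℝ) : ℂ) := by
    rw [hFval _ hmem]
    simp [hf_def, mul_neg, Real.cos_neg]
  rw [funext hterm, hFpt] at hps
  have hps2 := hps.mul_left ((π / Real.sin (x * π) : ℝ) : ℂ)
  have hcoef : ((π / Real.sin (x * π) : ℝ) : ℂ) * ((Real.sin (x * π) / π : ℝ) : ℂ) = 1 := by
    push_cast
    have hs' : Complex.sin ((x : ℂ) * (π : ℂ)) ≠ 0 := by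
      rw [← Complex.ofReal_mul, ← Complex.ofReal_sin]
      exact_mod_cast hsin
    field_simp
    exact div_self (by rwa [mul_comm] at hs')
  have heq : (fun n : ℤ => ((π / Real.sin (x * π) : ℝ) : ℂ) *
      (((Real.sin (x * π) / π : ℝ) : ℂ) * ((g n : ℝ) : ℂ))) = fun n : ℤ => ((g n : ℝ) : ℂ) := by
    funext n
    rw [← mul_assoc, hcoef, one_mul]
  rw [heq] at hps2
  have htarget : ((π / Real.sin (x * π) : ℝ) : ℂ) * ((Real.cos (x * π) : ℝ) : ℂ)
      = ((π * Real.cot (π * x) : ℝ) : ℂ) := by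
    norm_cast
    rw [Real.cot_eq_cos_div_sin, mul_comm π x]
    field_simp
  rw [htarget] at hps2
  exact Complex.hasSum_ofReal.mp hps2

end aux

theorem cot_partial_fraction (x : ℝ) (hx : ∀ n : ℤ, x ≠ (n : ℝ)) :
    Tendsto (fun r : ℕ => ∑ k ∈ Finset.Icc (-(r : ℤ)) (r : ℤ), 1 / (x + (k : ℝ)))
      atTop (nhds (π * Real.cot (π * x))) := by
  have hs := hasSum_main x hx
  have hmono : Monotone (fun r : ℕ => Finset.Icc (-(r : ℤ)) (r : ℤ)) := by
    intro a b hab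
    apply Finset.Icc_subset_Icc <;> omega
  have hcov : ∀ m : ℤ, ∃ r : ℕ, m ∈ Finset.Icc (-(r : ℤ)) (r : ℤ) := by
    intro m
    refine ⟨m.natAbs, ?_⟩
    simp only [Finset.mem_Icc]
    omega
  have htend := tendsto_atTop_finset_of_monotone hmono hcov
  have h2 := (hs : Tendsto _ atTop _).comp htend
  refine h2.congr ?_
  intro r
  show ∑ k ∈ Finset.Icc (-(r : ℤ)) (r : ℤ), (1 / (x - k) + 1 / (x + k)) / 2 = _
  have href : ∑ k ∈ Finset.Icc (-(r : ℤ)) (r : ℤ), 1 / (x - (k : ℝ))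
      = ∑ k ∈ Finset.Icc (-(r : ℤ)) (r : ℤ), 1 / (x + (k : ℝ)) := by
    refine Finset.sum_equiv (Equiv.neg ℤ) ?_ ?_
    · intro i
      simp only [Finset.mem_Icc, Equiv.neg_apply]
      omega
    · intro i _
      simp only [Equiv.neg_apply]
      push_cast
      ring_nf
  rw [← Finset.sum_div, Finset.sum_add_distrib, href]
  ring
end

section
/- Let a₁, a₂, a₃ be real with a₁ > 0 and D := 4a₁a₃ - a₂² > 0 (so Q(ω) = a₁ω₁² + a₂ω₁ω₂ + a₃ω₂² is positive definite), let v > 0, let α₂ ∈ ℝ \ ℤ and set F_{α₂}(x) = sinh(2πx)/(cosh(2πx) - cos(2πα₂)). Then ∫_{ℝ²} (1/ω₁) · ∑_{±} ± F_{α₂}(ω₂ ± (a₂/(2a₃))ω₁) · e^{-2πv Q^{±}(ω₁,ω₂)} dω₁ dω₂ = 0, where Q^{±}(ω₁,ω₂) = a₁ω₁² ± a₂ω₁ω₂ + a₃ω₂², i.e., after diagonalising, the + and − contributions cancel under the substitution ω₂ → ω₂ + (a₂/a₃)ω₁. -/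
open Real MeasureTheory

theorem pm_cancellation (a₁ a₂ a₃ : ℝ) (h₁ : 0 < a₁) (hD : 0 < 4*a₁*a₃ - a₂^2)
    (v : ℝ) (hv : 0 < v) (α₂ : ℝ) (hα₂ : ∀ n : ℤ, α₂ ≠ (n : ℝ)) :
    (∫ ω : ℝ × ℝ,
      (1 / ω.1) *
        ((Real.sinh (2*π*(ω.2 + (a₂/(2*a₃))*ω.1)) /
            (Real.cosh (2*π*(ω.2 + (a₂/(2*a₃))*ω.1)) - Real.cos (2*π*α₂)))
            * Real.exp (-2*π*v * (a₁*ω.1^2 + a₂*ω.1*ω.2 + a₃*ω.2^2))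
         - (Real.sinh (2*π*(ω.2 - (a₂/(2*a₃))*ω.1)) /
            (Real.cosh (2*π*(ω.2 - (a₂/(2*a₃))*ω.1)) - Real.cos (2*π*α₂)))
            * Real.exp (-2*π*v * (a₁*ω.1^2 - a₂*ω.1*ω.2 + a₃*ω.2^2)))) = 0 := by
  have ha₃ : 0 < a₃ := by nlinarith [sq_nonneg a₂]
  have hπ : 0 < π := Real.pi_pos
  -- cos (2πα₂) < 1
  have hc1 : Real.cos (2*π*α₂) < 1 := by
    rcases lt_or_eq_of_le (Real.cos_le_one (2*π*α₂)) with h | h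
    · exact h
    · exfalso
      obtain ⟨n, hn⟩ := (Real.cos_eq_one_iff _).1 h
      exact hα₂ n (by
        have : (n : ℝ) * (2 * π) = 2 * π * α₂ := hn
        field_simp at this
        nlinarith [this])
  set c := Real.cos (2*π*α₂) with hc
  have hcm1 : -1 ≤ c := Real.neg_one_le_cos _
  -- uniform bound on F
  have hFbdd : ∀ t : ℝ, |Real.sinh t / (Real.cosh t - c)| ≤ 2 / (1 - c) := by
    intro t
    have h1 : 1 ≤ Real.cosh t := Real.one_le_cosh t
    have h2 : |Real.sinh t| < Real.cosh t := by
      rw [Real.abs_sinh]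
      calc Real.sinh |t| < Real.cosh |t| := Real.sinh_lt_cosh _
        _ = Real.cosh t := Real.cosh_abs t
    have hden : 0 < Real.cosh t - c := by linarith
    rw [abs_div, abs_of_pos hden, div_le_div_iff₀ hden (by linarith)]
    nlinarith [abs_nonneg (Real.sinh t)]
  set f : ℝ × ℝ → ℝ := fun ω =>
      (1 / ω.1) *
        ((Real.sinh (2*π*(ω.2 + (a₂/(2*a₃))*ω.1)) /
            (Real.cosh (2*π*(ω.2 + (a₂/(2*a₃))*ω.1)) - c))
            * Real.exp (-2*π*v * (a₁*ω.1^2 + a₂*ω.1*ω.2 + a₃*ω.2^2))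
         - (Real.sinh (2*π*(ω.2 - (a₂/(2*a₃))*ω.1)) /
            (Real.cosh (2*π*(ω.2 - (a₂/(2*a₃))*ω.1)) - c))
            * Real.exp (-2*π*v * (a₁*ω.1^2 - a₂*ω.1*ω.2 + a₃*ω.2^2))) with hfdef
  show (∫ ω : ℝ × ℝ, f ω) = 0
  -- inner integral vanishes for every x
  have hinner : ∀ x : ℝ, (∫ y : ℝ, f (x, y)) = 0 := by
    intro x
    set G : ℝ → ℝ := fun y =>
      (Real.sinh (2*π*(y + (a₂/(2*a₃))*x)) /
        (Real.cosh (2*π*(y + (a₂/(2*a₃))*x)) - c))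
        * Real.exp (-2*π*v * (a₁*x^2 + a₂*x*y + a₃*y^2)) with hGdef
    have hshift : ∀ y : ℝ, G (y - (a₂/a₃)*x) =
        (Real.sinh (2*π*(y - (a₂/(2*a₃))*x)) /
          (Real.cosh (2*π*(y - (a₂/(2*a₃))*x)) - c))
          * Real.exp (-2*π*v * (a₁*x^2 - a₂*x*y + a₃*y^2)) := by
      intro y
      have harg : y - (a₂/a₃)*x + (a₂/(2*a₃))*x = y - (a₂/(2*a₃))*x := by
        field_simp; ring
      have hexp : a₁*x^2 + a₂*x*(y - (a₂/a₃)*x) + a₃*(y - (a₂/a₃)*x)^2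
          = a₁*x^2 - a₂*x*y + a₃*y^2 := by
        field_simp; ring
      simp only [hGdef, harg, hexp]
    have hfx : ∀ y : ℝ, f (x, y) = (1 / x) * (G y - G (y - (a₂/a₃)*x)) := by
      intro y
      rw [hshift y]
    -- integrability of G
    have hGint : Integrable G := by
      have hexpeq : ∀ y : ℝ, Real.exp (-2*π*v * (a₁*x^2 + a₂*x*y + a₃*y^2))
          = Real.exp (-(2*π*v*a₃) * (y + (a₂*x)/(2*a₃))^2)
            * Real.exp (-2*π*v*(a₁ - a₂^2/(4*a₃))*x^2) := by
        intro y
        rw [← Real.exp_add]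
        congr 1
        field_simp
        ring
      have hgauss : Integrable (fun y : ℝ =>
          Real.exp (-(2*π*v*a₃) * (y + (a₂*x)/(2*a₃))^2)
            * Real.exp (-2*π*v*(a₁ - a₂^2/(4*a₃))*x^2)) := by
        apply Integrable.mul_const
        exact (integrable_exp_neg_mul_sq (by positivity)).comp_add_right _
      have hcont : Continuous (fun y : ℝ =>
          Real.sinh (2*π*(y + (a₂/(2*a₃))*x)) /
            (Real.cosh (2*π*(y + (a₂/(2*a₃))*x)) - c)) := by
        apply Continuous.div
        · exact Real.continuous_sinh.comp (by continuity)
        · exact (Real.continuous_cosh.comp (by continuity)).sub continuous_const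
        · intro y
          have := Real.one_le_cosh (2*π*(y + (a₂/(2*a₃))*x))
          intro h; rw [sub_eq_zero] at h; linarith
      have : Integrable (fun y : ℝ =>
          (Real.sinh (2*π*(y + (a₂/(2*a₃))*x)) /
            (Real.cosh (2*π*(y + (a₂/(2*a₃))*x)) - c)) *
          (Real.exp (-(2*π*v*a₃) * (y + (a₂*x)/(2*a₃))^2)
            * Real.exp (-2*π*v*(a₁ - a₂^2/(4*a₃))*x^2))) := by
        apply hgauss.bdd_mul (c := 2/(1-c)) hcont.aestronglyMeasurable
        exact Filter.Eventually.of_forall fun y => by rw [Real.norm_eq_abs]; exact hFbdd _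
      refine this.congr (Filter.Eventually.of_forall fun y => ?_)
      simp only [hGdef, hexpeq y]
    have hGint' : Integrable (fun y => G (y - (a₂/a₃)*x)) :=
      hGint.comp_sub_right _
    calc (∫ y : ℝ, f (x, y))
        = ∫ y : ℝ, (1 / x) * (G y - G (y - (a₂/a₃)*x)) := by
          exact integral_congr_ae (Filter.Eventually.of_forall fun y => hfx y)
      _ = (1 / x) * ∫ y : ℝ, (G y - G (y - (a₂/a₃)*x)) := integral_const_mul _ _
      _ = (1 / x) * ((∫ y : ℝ, G y) - ∫ y : ℝ, G (y - (a₂/a₃)*x)) := by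
          rw [integral_sub hGint hGint']
      _ = 0 := by
          rw [integral_sub_right_eq_self G ((a₂/a₃)*x)]
          ring
  by_cases hInt : Integrable f (volume : Measure (ℝ × ℝ))
  · rw [show (volume : Measure (ℝ × ℝ)) = (volume : Measure ℝ).prod volume from rfl] at hInt
    rw [show (volume : Measure (ℝ × ℝ)) = (volume : Measure ℝ).prod volume from rfl]
    rw [MeasureTheory.integral_prod f hInt]
    simp only [hinner, integral_zero]
  · exact integral_undef hInt
end

section
/- For v > 0 and a positive definite real quadratic form Q(ω₁,ω₂) = a₁ω₁² + a₂ω₁ω₂ + a₃ω₂², and for α₁, α₂ ∈ ℝ \ ℤ, the double integral ∫_{ℝ²} cot(π(iω₁+α₁)) cot(π(iω₂+α₂)) e^{-2πv Q(ω₁,ω₂)} dω₁ dω₂ converges absolutely and is real; in fact it equals ∫_{ℝ²} ( G_{α₁}(ω₁)G_{α₂}(ω₂) - F_{α₁}(ω₁)F_{α₂}(ω₂) ) e^{-2πv Q(ω)} dω₁ dω₂. -/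
open Real MeasureTheory Complex

private lemma myCot_eq (x y : ℝ) (hx : Real.sin x ≠ 0) :
    Complex.cot (↑x + ↑y * I) =
    (↑(Real.sin (2*x) / (Real.cosh (2*y) - Real.cos (2*x))) -
     ↑(Real.sinh (2*y) / (Real.cosh (2*y) - Real.cos (2*x))) * I) := by
  have hdpos : 0 < Real.cosh (2*y) - Real.cos (2*x) := by
    have h1 : Real.cos (2*x) = 1 - 2 * Real.sin x ^ 2 := by
      rw [Real.cos_two_mul']; nlinarith [Real.sin_sq_add_cos_sq x]
    have h2 : (1:ℝ) ≤ Real.cosh (2*y) := Real.one_le_cosh _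
    nlinarith [sq_pos_of_ne_zero hx]
  have hd : (Real.cosh (2*y) - Real.cos (2*x)) ≠ 0 := ne_of_gt hdpos
  have hs : Complex.sin (↑x + ↑y * I) ≠ 0 := by
    rw [Complex.sin_add_mul_I]
    intro h
    have := congrArg Complex.re h
    simp [← Complex.ofReal_sin, ← Complex.ofReal_cos, ← Complex.ofReal_sinh,
      ← Complex.ofReal_cosh] at this
    rcases this with h' | h'
    · exact hx h'
    · exact absurd h' (ne_of_gt (Real.cosh_pos y))
  have hs' : Complex.sin ↑x * Complex.cosh ↑y + Complex.cos ↑x * Complex.sinh ↑y * I ≠ 0 := by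
    rw [← Complex.sin_add_mul_I]; exact hs
  rw [Complex.cot, Complex.cos_add_mul_I, Complex.sin_add_mul_I, div_eq_iff hs']
  simp only [← Complex.ofReal_sin, ← Complex.ofReal_cos, ← Complex.ofReal_sinh,
    ← Complex.ofReal_cosh, Complex.ext_iff, Complex.add_re, Complex.add_im, Complex.sub_re,
    Complex.sub_im, Complex.mul_re, Complex.mul_im, Complex.ofReal_re, Complex.ofReal_im,
    Complex.I_re, Complex.I_im]
  rw [Real.sin_two_mul, Real.sinh_two_mul, Real.cosh_two_mul, Real.cos_two_mul']
  have h1 := Real.sin_sq_add_cos_sq x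
  have h2 := Real.cosh_sq_sub_sinh_sq y
  have hd' : Real.cosh y ^2 + Real.sinh y ^2 - (Real.cos x ^2 - Real.sin x ^2) ≠ 0 := by
    rw [Real.cosh_two_mul, Real.cos_two_mul'] at hd; exact hd
  constructor
  · field_simp
    linear_combination (Real.cos x * Real.cosh y) * (h2 - h1)
  · field_simp
    linear_combination (Real.sin x * Real.sinh y * (2*Real.cosh y^2 - 3 - 2*Real.sinh y^2)) * h1
      + (Real.sin x * Real.sinh y * (3 - 2*Real.sin x^2 - 2*Real.cos x^2)) * h2

private lemma sin_pi_ne (α : ℝ) (hα : ∀ n : ℤ, α ≠ (n : ℝ)) : Real.sin (π * α) ≠ 0 := by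
  intro h
  rcases Real.sin_eq_zero_iff.1 h with ⟨n, hn⟩
  refine hα n (mul_left_cancel₀ Real.pi_ne_zero ?_)
  linarith [mul_comm π (n:ℝ)]

private lemma myCot_eq' (α ω : ℝ) (hα : ∀ n : ℤ, α ≠ (n : ℝ)) :
    Complex.cot ((π : ℂ) * (Complex.I * (ω : ℂ) + (α : ℂ))) =
    (↑(Real.sin (2*π*α) / (Real.cosh (2*π*ω) - Real.cos (2*π*α))) -
     ↑(Real.sinh (2*π*ω) / (Real.cosh (2*π*ω) - Real.cos (2*π*α))) * I) := by
  have hz : (π : ℂ) * (Complex.I * (ω : ℂ) + (α : ℂ)) = ↑(π*α) + ↑(π*ω) * I := by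
    push_cast; ring
  rw [hz, myCot_eq _ _ (sin_pi_ne α hα)]
  norm_num [mul_assoc]

private lemma cos_lt (α : ℝ) (hα : ∀ n : ℤ, α ≠ (n : ℝ)) : Real.cos (2*π*α) < 1 := by
  have hx := sin_pi_ne α hα
  have : Real.cos (2*π*α) = 1 - 2 * Real.sin (π*α) ^ 2 := by
    rw [mul_assoc, Real.cos_two_mul']; nlinarith [Real.sin_sq_add_cos_sq (π*α)]
  nlinarith [sq_pos_of_ne_zero hx]

private lemma den_pos (c t : ℝ) (hc : c < 1) : 0 < Real.cosh (2*π*t) - c := by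
  nlinarith [Real.one_le_cosh (2*π*t)]

private lemma G_bound (α t : ℝ) (hc : Real.cos (2*π*α) < 1) :
    |Real.sin (2*π*α) / (Real.cosh (2*π*t) - Real.cos (2*π*α))| ≤ 1/(1 - Real.cos (2*π*α)) := by
  have hd := den_pos _ t hc
  rw [abs_div, abs_of_pos hd]
  exact div_le_div₀ (by positivity) (Real.abs_sin_le_one _) (by linarith) (by nlinarith [Real.one_le_cosh (2*π*t)])

private lemma F_bound (α t : ℝ) (hc : Real.cos (2*π*α) < 1) :
    |Real.sinh (2*π*t) / (Real.cosh (2*π*t) - Real.cos (2*π*α))| ≤ 2/(1 - Real.cos (2*π*α)) := by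
  have hd := den_pos _ t hc
  have hch := Real.one_le_cosh (2*π*t)
  have hsh : |Real.sinh (2*π*t)| ≤ Real.cosh (2*π*t) := by
    refine abs_le.2 ⟨?_, le_of_lt (Real.sinh_lt_cosh _)⟩
    have := Real.sinh_lt_cosh (-(2*π*t))
    rw [Real.sinh_neg, Real.cosh_neg] at this; linarith
  have hc2 : -1 ≤ Real.cos (2*π*α) := Real.neg_one_le_cos _
  rw [abs_div, abs_of_pos hd, div_le_div_iff₀ hd (by linarith)]
  nlinarith [abs_nonneg (Real.sinh (2*π*t)),
    mul_nonneg (sub_nonneg.2 hsh) (sub_nonneg.2 hc2),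
    mul_nonneg (sub_nonneg.2 hsh) (sub_nonneg.2 hc.le)]

private lemma my_integral_ofReal {X : Type*} [MeasurableSpace X] {μ : Measure X} {f : X → ℝ} :
    ∫ x, ((f x : ℝ) : ℂ) ∂μ = ((∫ x, f x ∂μ : ℝ) : ℂ) := integral_ofReal

private lemma prod_split (a b c d e : ℝ) :
    ((a:ℂ) - (b:ℂ)*I) * ((c:ℂ) - (d:ℂ)*I) * (e:ℂ) = ↑((a*c - b*d)*e) - ↑((a*d + b*c)*e)*I := by
  push_cast
  linear_combination ((b:ℂ)*d*e) * Complex.I_sq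

theorem cot_cot_integral (a₁ a₂ a₃ : ℝ) (h₁ : 0 < a₁) (hD : 0 < 4*a₁*a₃ - a₂^2)
    (v : ℝ) (hv : 0 < v) (α₁ α₂ : ℝ) (hα₁ : ∀ n : ℤ, α₁ ≠ (n : ℝ)) (hα₂ : ∀ n : ℤ, α₂ ≠ (n : ℝ)) :
    Integrable (fun ω : ℝ × ℝ =>
      Complex.cot ((π : ℂ) * (Complex.I * (ω.1 : ℂ) + (α₁ : ℂ))) *
      Complex.cot ((π : ℂ) * (Complex.I * (ω.2 : ℂ) + (α₂ : ℂ))) *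
      (Real.exp (-2*π*v * (a₁*ω.1^2 + a₂*ω.1*ω.2 + a₃*ω.2^2)) : ℂ))
    ∧ (∫ ω : ℝ × ℝ,
        Complex.cot ((π : ℂ) * (Complex.I * (ω.1 : ℂ) + (α₁ : ℂ))) *
        Complex.cot ((π : ℂ) * (Complex.I * (ω.2 : ℂ) + (α₂ : ℂ))) *
        (Real.exp (-2*π*v * (a₁*ω.1^2 + a₂*ω.1*ω.2 + a₃*ω.2^2)) : ℂ))
      = ((∫ ω : ℝ × ℝ,
          (Real.sin (2*π*α₁) / (Real.cosh (2*π*ω.1) - Real.cos (2*π*α₁)) *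
             (Real.sin (2*π*α₂) / (Real.cosh (2*π*ω.2) - Real.cos (2*π*α₂)))
           - Real.sinh (2*π*ω.1) / (Real.cosh (2*π*ω.1) - Real.cos (2*π*α₁)) *
             (Real.sinh (2*π*ω.2) / (Real.cosh (2*π*ω.2) - Real.cos (2*π*α₂)))) *
          Real.exp (-2*π*v * (a₁*ω.1^2 + a₂*ω.1*ω.2 + a₃*ω.2^2)) : ℝ) : ℂ) := by
  -- abbreviations
  set G₁ : ℝ → ℝ := fun t => Real.sin (2*π*α₁) / (Real.cosh (2*π*t) - Real.cos (2*π*α₁)) with hG₁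
  set G₂ : ℝ → ℝ := fun t => Real.sin (2*π*α₂) / (Real.cosh (2*π*t) - Real.cos (2*π*α₂)) with hG₂
  set F₁ : ℝ → ℝ := fun t => Real.sinh (2*π*t) / (Real.cosh (2*π*t) - Real.cos (2*π*α₁)) with hF₁
  set F₂ : ℝ → ℝ := fun t => Real.sinh (2*π*t) / (Real.cosh (2*π*t) - Real.cos (2*π*α₂)) with hF₂
  set E : ℝ × ℝ → ℝ := fun ω => Real.exp (-2*π*v * (a₁*ω.1^2 + a₂*ω.1*ω.2 + a₃*ω.2^2)) with hE
  have hc₁ := cos_lt α₁ hα₁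
  have hc₂ := cos_lt α₂ hα₂
  -- positive definiteness: Q ≥ δ |ω|²
  have ha₃ : 0 < a₃ := by nlinarith [sq_nonneg a₂]
  obtain ⟨δ, hδpos, hδ⟩ : ∃ δ : ℝ, 0 < δ ∧ ∀ x y : ℝ,
      δ * (x^2 + y^2) ≤ a₁*x^2 + a₂*x*y + a₃*y^2 := by
    refine ⟨min (a₁/2) (min (a₃/2) ((4*a₁*a₃ - a₂^2)/(4*(a₁+a₃)))), ?_, ?_⟩
    · have : 0 < (4*a₁*a₃ - a₂^2)/(4*(a₁+a₃)) := by positivity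
      positivity
    · intro x y
      set δ := min (a₁/2) (min (a₃/2) ((4*a₁*a₃ - a₂^2)/(4*(a₁+a₃)))) with hδdef
      have h1 : δ ≤ a₁/2 := min_le_left _ _
      have h3 : δ ≤ (4*a₁*a₃ - a₂^2)/(4*(a₁+a₃)) := le_trans (min_le_right _ _) (min_le_right _ _)
      have h4 : δ * (4*(a₁+a₃)) ≤ 4*a₁*a₃ - a₂^2 := (le_div_iff₀ (by positivity)).1 h3
      have hA : 0 < a₁ - δ := by linarith
      have h4AC : 0 ≤ 4*(a₁-δ)*(a₃-δ) - a₂^2 := by nlinarith [sq_nonneg δ]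
      nlinarith [sq_nonneg (2*(a₁-δ)*x + a₂*y), mul_nonneg h4AC (sq_nonneg y), hA]
  set b : ℝ := 2*π*v*δ with hb
  have hbpos : 0 < b := by positivity
  -- exponential bound
  have hEbound : ∀ ω : ℝ × ℝ, E ω ≤ Real.exp (-b*ω.1^2) * Real.exp (-b*ω.2^2) := by
    intro ω
    rw [hE, ← Real.exp_add]
    apply Real.exp_le_exp.2
    have := hδ ω.1 ω.2
    nlinarith [Real.pi_pos, mul_le_mul_of_nonneg_left this (by positivity : (0:ℝ) ≤ 2*π*v)]
  have hEpos : ∀ ω : ℝ × ℝ, 0 < E ω := fun ω => Real.exp_pos _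
  have hEcont : Continuous E := by
    apply Real.continuous_exp.comp; fun_prop
  -- continuity of the trig factors
  have hd₁ : ∀ t : ℝ, Real.cosh (2*π*t) - Real.cos (2*π*α₁) ≠ 0 :=
    fun t => ne_of_gt (den_pos _ t hc₁)
  have hd₂ : ∀ t : ℝ, Real.cosh (2*π*t) - Real.cos (2*π*α₂) ≠ 0 :=
    fun t => ne_of_gt (den_pos _ t hc₂)
  have hdenc : ∀ c : ℝ, Continuous fun t : ℝ => Real.cosh (2*π*t) - c := by
    intro c; fun_prop
  have hcG₁ : Continuous G₁ := continuous_const.div (hdenc _) hd₁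
  have hcG₂ : Continuous G₂ := continuous_const.div (hdenc _) hd₂
  have hcF₁ : Continuous F₁ := Continuous.div (by fun_prop) (hdenc _) hd₁
  have hcF₂ : Continuous F₂ := Continuous.div (by fun_prop) (hdenc _) hd₂
  -- generic integrability of bounded-times-E
  have key : ∀ (h : ℝ × ℝ → ℝ), Continuous h → ∀ C : ℝ, (∀ ω, |h ω| ≤ C) →
      Integrable (fun ω => h ω * E ω) := by
    intro h hcont C hC
    refine Integrable.mono'
      (((integrable_exp_neg_mul_sq hbpos).mul_prod (integrable_exp_neg_mul_sq hbpos)).const_mul C)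
      ((hcont.mul hEcont).aestronglyMeasurable) ?_
    filter_upwards with ω
    have h0 : 0 ≤ C := le_trans (abs_nonneg _) (hC ω)
    have := hEbound ω
    rw [Real.norm_eq_abs, abs_mul, abs_of_pos (hEpos ω)]
    calc |h ω| * E ω ≤ C * (Real.exp (-b*ω.1^2) * Real.exp (-b*ω.2^2)) := by
          apply mul_le_mul (hC ω) this (le_of_lt (hEpos ω)) h0
      _ = C * (Real.exp (-b*ω.1^2) * Real.exp (-b*ω.2^2)) := rfl
  -- bounds
  have hGb₁ : ∀ t, |G₁ t| ≤ 1/(1 - Real.cos (2*π*α₁)) := fun t => G_bound α₁ t hc₁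
  have hGb₂ : ∀ t, |G₂ t| ≤ 1/(1 - Real.cos (2*π*α₂)) := fun t => G_bound α₂ t hc₂
  have hFb₁ : ∀ t, |F₁ t| ≤ 2/(1 - Real.cos (2*π*α₁)) := fun t => F_bound α₁ t hc₁
  have hFb₂ : ∀ t, |F₂ t| ≤ 2/(1 - Real.cos (2*π*α₂)) := fun t => F_bound α₂ t hc₂
  -- integrability of u and w
  have hu : Integrable (fun ω : ℝ × ℝ => (G₁ ω.1 * G₂ ω.2 - F₁ ω.1 * F₂ ω.2) * E ω) := by
    refine key _ (((hcG₁.comp continuous_fst).mul (hcG₂.comp continuous_snd)).sub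
      ((hcF₁.comp continuous_fst).mul (hcF₂.comp continuous_snd))) (1/(1 - Real.cos (2*π*α₁)) * (1/(1 - Real.cos (2*π*α₂)))
      + 2/(1 - Real.cos (2*π*α₁)) * (2/(1 - Real.cos (2*π*α₂)))) ?_
    intro ω
    calc |G₁ ω.1 * G₂ ω.2 - F₁ ω.1 * F₂ ω.2| ≤ |G₁ ω.1| * |G₂ ω.2| + |F₁ ω.1| * |F₂ ω.2| := by
          rw [← abs_mul, ← abs_mul]; exact abs_sub _ _
      _ ≤ _ := by
          gcongr
          · exact hGb₁ _
          · exact hGb₂ _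
          · exact hFb₁ _
          · exact hFb₂ _
  have hw : Integrable (fun ω : ℝ × ℝ => (G₁ ω.1 * F₂ ω.2 + F₁ ω.1 * G₂ ω.2) * E ω) := by
    refine key _ (((hcG₁.comp continuous_fst).mul (hcF₂.comp continuous_snd)).add
      ((hcF₁.comp continuous_fst).mul (hcG₂.comp continuous_snd))) (1/(1 - Real.cos (2*π*α₁)) * (2/(1 - Real.cos (2*π*α₂)))
      + 2/(1 - Real.cos (2*π*α₁)) * (1/(1 - Real.cos (2*π*α₂)))) ?_
    intro ω
    calc |G₁ ω.1 * F₂ ω.2 + F₁ ω.1 * G₂ ω.2| ≤ |G₁ ω.1| * |F₂ ω.2| + |F₁ ω.1| * |G₂ ω.2| := by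
          rw [← abs_mul, ← abs_mul]; exact abs_add_le _ _
      _ ≤ _ := by
          gcongr
          · exact hGb₁ _
          · exact hFb₂ _
          · exact hFb₁ _
          · exact hGb₂ _
  -- pointwise rewriting of the complex integrand
  have hrw : ∀ ω : ℝ × ℝ,
      Complex.cot ((π : ℂ) * (Complex.I * (ω.1 : ℂ) + (α₁ : ℂ))) *
      Complex.cot ((π : ℂ) * (Complex.I * (ω.2 : ℂ) + (α₂ : ℂ))) *
      (Real.exp (-2*π*v * (a₁*ω.1^2 + a₂*ω.1*ω.2 + a₃*ω.2^2)) : ℂ)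
      = ↑((G₁ ω.1 * G₂ ω.2 - F₁ ω.1 * F₂ ω.2) * E ω)
        - ↑((G₁ ω.1 * F₂ ω.2 + F₁ ω.1 * G₂ ω.2) * E ω) * I := by
    intro ω
    simp only [hG₁, hG₂, hF₁, hF₂, hE]
    rw [myCot_eq' α₁ ω.1 hα₁, myCot_eq' α₂ ω.2 hα₂, prod_split]
  -- oddness : integral of w vanishes
  have hwodd : ∀ ω : ℝ × ℝ,
      (G₁ (-ω).1 * F₂ (-ω).2 + F₁ (-ω).1 * G₂ (-ω).2) * E (-ω)
      = -((G₁ ω.1 * F₂ ω.2 + F₁ ω.1 * G₂ ω.2) * E ω) := by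
    intro ω
    have e1 : ∀ t : ℝ, 2*π*(-t) = -(2*π*t) := fun t => by ring
    simp only [hG₁, hG₂, hF₁, hF₂, hE, Prod.fst_neg, Prod.snd_neg, e1, Real.sinh_neg,
      Real.cosh_neg, neg_sq, neg_mul_neg]
    ring_nf
  have hwzero : (∫ ω : ℝ × ℝ, (G₁ ω.1 * F₂ ω.2 + F₁ ω.1 * G₂ ω.2) * E ω) = 0 := by
    have h := integral_neg_eq_self (fun ω : ℝ × ℝ => (G₁ ω.1 * F₂ ω.2 + F₁ ω.1 * G₂ ω.2) * E ω)
      volume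
    simp only [hwodd, integral_neg] at h
    linarith
  constructor
  · rw [show (fun ω : ℝ × ℝ =>
      Complex.cot ((π : ℂ) * (Complex.I * (ω.1 : ℂ) + (α₁ : ℂ))) *
      Complex.cot ((π : ℂ) * (Complex.I * (ω.2 : ℂ) + (α₂ : ℂ))) *
      (Real.exp (-2*π*v * (a₁*ω.1^2 + a₂*ω.1*ω.2 + a₃*ω.2^2)) : ℂ)) = fun ω : ℝ × ℝ =>
        ↑((G₁ ω.1 * G₂ ω.2 - F₁ ω.1 * F₂ ω.2) * E ω)
        - ↑((G₁ ω.1 * F₂ ω.2 + F₁ ω.1 * G₂ ω.2) * E ω) * I from funext hrw]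
    exact hu.ofReal.sub (hw.ofReal.mul_const I)
  · rw [show (fun ω : ℝ × ℝ =>
      Complex.cot ((π : ℂ) * (Complex.I * (ω.1 : ℂ) + (α₁ : ℂ))) *
      Complex.cot ((π : ℂ) * (Complex.I * (ω.2 : ℂ) + (α₂ : ℂ))) *
      (Real.exp (-2*π*v * (a₁*ω.1^2 + a₂*ω.1*ω.2 + a₃*ω.2^2)) : ℂ)) = fun ω : ℝ × ℝ =>
        ↑((G₁ ω.1 * G₂ ω.2 - F₁ ω.1 * F₂ ω.2) * E ω)
        - ↑((G₁ ω.1 * F₂ ω.2 + F₁ ω.1 * G₂ ω.2) * E ω) * I from funext hrw]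
    have hsplit : (∫ ω : ℝ × ℝ, (↑((G₁ ω.1 * G₂ ω.2 - F₁ ω.1 * F₂ ω.2) * E ω)
        - ↑((G₁ ω.1 * F₂ ω.2 + F₁ ω.1 * G₂ ω.2) * E ω) * I : ℂ))
        = (∫ ω : ℝ × ℝ, (((G₁ ω.1 * G₂ ω.2 - F₁ ω.1 * F₂ ω.2) * E ω : ℝ) : ℂ))
          - ∫ ω : ℝ × ℝ, (((G₁ ω.1 * F₂ ω.2 + F₁ ω.1 * G₂ ω.2) * E ω : ℝ) : ℂ) * I :=
      integral_sub hu.ofReal (hw.ofReal.mul_const I)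
    rw [hsplit, integral_mul_const, my_integral_ofReal, my_integral_ofReal, hwzero]
    simp only [Complex.ofReal_zero, zero_mul, sub_zero]
    rfl
end
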